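/- (Theorem 1, sufficiency) Let {f̂(n)}_{n≥0} ∈ GBV and {f̂(n) + f̂(−n)}_{n≥1} ∈ GBV. If Σ_{n=1}^{∞} |f̂(n) + f̂(−n)| < ∞ and lim_{n→∞} n·f̂(n) = 0, then the symmetric partial sums Σ_{k=−n}^{n} f̂(k)e^{ikx} converge at every real x and the sum function f is continuous, i.e. f ∈ C_{2π}. -/

import Mathlib

open Filter Complex Real

noncomputable section

/-- `K(θ) = {z ∈ ℂ : |arg z| ≤ θ}`. -/
def Kset (θ : ℝ) : Set ℂ := {z : ℂ | |Complex.arg z| ≤ θ}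

/-- The class GBV: `c_n ∈ K(θ₁)` for some `θ₁ ∈ [0, π/2)` and all `n ≥ 1`, and
`Σ_{n=m}^{2m} |Δc_n| ≤ M · max_{m ≤ n < m+N₀} |c_n|` for all `m ≥ 1`. -/
def GBV (c : ℕ → ℂ) : Prop :=
  (∃ θ₁ : ℝ, 0 ≤ θ₁ ∧ θ₁ < Real.pi / 2 ∧ ∀ n, 1 ≤ n → c n ∈ Kset θ₁) ∧
  (∃ N₀ : ℕ, 1 ≤ N₀ ∧ ∃ M : ℝ, 0 < M ∧ ∀ m, 1 ≤ m →
    (∑ n ∈ Finset.Icc m (2 * m), ‖c n - c (n + 1)‖) ≤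
      M * ⨆ n ∈ Finset.Ico m (m + N₀), ‖c n‖)


lemma my_cos_eq (x : ℝ) : Real.cos x = 1 - 2 * Real.sin (x/2)^2 := by
  have h1 := Real.cos_two_mul' (x/2)
  have h2 := Real.sin_sq_add_cos_sq (x/2)
  have : 2*(x/2) = x := by ring
  rw [this] at h1; nlinarith

lemma my_sin_nat_mul_le (n : ℕ) (x : ℝ) : |Real.sin (n*x)| ≤ n * |Real.sin x| := by
  induction n with
  | zero => simp
  | succ n ih =>
    have : ((n:ℝ)+1)*x = n*x + x := by ring
    push_cast
    rw [this, Real.sin_add]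
    calc |Real.sin (n*x) * Real.cos x + Real.cos (n*x) * Real.sin x|
        ≤ |Real.sin (n*x) * Real.cos x| + |Real.cos (n*x) * Real.sin x| := abs_add_le _ _
      _ ≤ |Real.sin (n*x)| * 1 + 1 * |Real.sin x| := by
          rw [abs_mul, abs_mul]
          gcongr <;> first | exact Real.abs_cos_le_one _ | exact abs_nonneg _
      _ ≤ (n:ℝ) * |Real.sin x| + 1 * |Real.sin x| := by
          have := ih; nlinarith [abs_nonneg (Real.sin x)]
      _ = ((n:ℝ)+1) * |Real.sin x| := by ring

lemma my_exp_sub_one_abs (x : ℝ) :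
    ‖Complex.exp ((x:ℂ)*I) - 1‖ = 2 * |Real.sin (x/2)| := by
  have h : Complex.exp ((x:ℂ)*I) - 1 = ⟨Real.cos x - 1, Real.sin x⟩ := by
    rw [Complex.exp_mul_I]
    apply Complex.ext <;>
      simp [Complex.cos_ofReal_re, Complex.sin_ofReal_re, Complex.cos_ofReal_im,
        Complex.sin_ofReal_im]
  rw [h]
  have hsq : ‖(⟨Real.cos x - 1, Real.sin x⟩ : ℂ)‖^2
      = (2 * |Real.sin (x/2)|)^2 := by
    rw [Complex.sq_norm, Complex.normSq_mk]
    have h1 := my_cos_eq x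
    have h2 := Real.sin_sq_add_cos_sq x
    have h3 : |Real.sin (x/2)|^2 = Real.sin (x/2)^2 := sq_abs _
    nlinarith
  have h1 : (0:ℝ) ≤ ‖(⟨Real.cos x - 1, Real.sin x⟩ : ℂ)‖ := norm_nonneg _
  have h2 : (0:ℝ) ≤ 2 * |Real.sin (x/2)| := by positivity
  nlinarith

lemma my_sin_vanish {x : ℝ} (hx : Real.sin (x/2) = 0) (n : ℕ) : Real.sin (n*x) = 0 := by
  obtain ⟨k, hk⟩ := Real.sin_eq_zero_iff.1 hx
  have hxval : x = 2*k*π := by linarith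
  have : (n:ℝ)*x = ((2*(n:ℤ)*k : ℤ):ℝ)*π := by rw [hxval]; push_cast; ring
  rw [this, Real.sin_int_mul_pi]

lemma my_dirichlet {x : ℝ} (hx : Real.sin (x/2) ≠ 0) (p q : ℕ) :
    |∑ n ∈ Finset.Icc p q, Real.sin (n*x)| ≤ 1/|Real.sin (x/2)| := by
  set w : ℂ := Complex.exp ((x:ℂ)*I) with hw
  have hδ : 0 < |Real.sin (x/2)| := abs_pos.2 hx
  have hwne : w ≠ 1 := by
    intro h
    have := my_exp_sub_one_abs x
    rw [← hw, h, sub_self, norm_zero] at this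
    nlinarith
  have hwn : ∀ n : ℕ, w^n = Complex.exp ((n:ℂ)*x*I) := by
    intro n; rw [hw, ← Complex.exp_nat_mul]; ring_nf
  have him : ∀ n : ℕ, (w^n).im = Real.sin (n*x) := by
    intro n
    rw [hwn n]
    have : (n:ℂ)*x*I = (((n:ℝ)*x : ℝ):ℂ)*I := by push_cast; ring
    rw [this, Complex.exp_ofReal_mul_I_im]
  have hsum_eq : ∑ n ∈ Finset.Icc p q, Real.sin (n*x) = (∑ n ∈ Finset.Icc p q, w^n).im := by
    rw [Complex.im_sum]
    exact Finset.sum_congr rfl fun n _ => (him n).symm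
  have habs : ‖∑ n ∈ Finset.Icc p q, w^n‖ ≤ 1/|Real.sin (x/2)| := by
    rcases le_or_gt p q with hpq | hpq
    · have : ∑ n ∈ Finset.Icc p q, w^n = w^p * ∑ j ∈ Finset.range (q+1-p), w^j := by
        rw [Finset.mul_sum]
        rw [show Finset.Icc p q = Finset.Ico p (q+1) by rfl, Finset.sum_Ico_eq_sum_range]
        exact Finset.sum_congr rfl fun j _ => by rw [← pow_add]
      rw [this, norm_mul, geom_sum_eq hwne]
      have hwabs : ∀ n : ℕ, ‖w^n‖ = 1 := by
        intro n
        rw [hwn n]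
        have : (n:ℂ)*x*I = (((n:ℝ)*x : ℝ):ℂ)*I := by push_cast; ring
        rw [this, Complex.norm_exp_ofReal_mul_I]
      rw [hwabs, one_mul, norm_div]
      have hnum : ‖w^(q+1-p) - 1‖ ≤ 2 := by
        calc ‖w^(q+1-p) - 1‖ = ‖w^(q+1-p) - 1‖ := rfl
          _ ≤ ‖w^(q+1-p)‖ + ‖(1:ℂ)‖ := norm_sub_le _ _
          _ = ‖w^(q+1-p)‖ + 1 := by rw [norm_one]
          _ ≤ 2 := by rw [hwabs]; norm_num
      have hden : ‖w - 1‖ = 2*|Real.sin (x/2)| := my_exp_sub_one_abs x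
      rw [hden]
      rw [div_le_div_iff₀ (by positivity) (by positivity)]
      calc ‖w^(q+1-p) - 1‖ * |Real.sin (x/2)| ≤ 2 * |Real.sin (x/2)| := by
            gcongr
        _ ≤ 1 * (2*|Real.sin (x/2)|) := by linarith
    · rw [Finset.Icc_eq_empty (by omega)]
      simp only [Finset.sum_empty, norm_zero]
      positivity
  rw [hsum_eq]
  exact (Complex.abs_im_le_norm _).trans habs

lemma my_abel_identity (a s : ℕ → ℂ) (r : ℕ) : ∀ q, r ≤ q →
    ∑ n ∈ Finset.Icc r q, a n * s n =
      ∑ n ∈ Finset.Ico r q, (a n - a (n+1)) * (∑ k ∈ Finset.Icc r n, s k)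
        + a q * ∑ k ∈ Finset.Icc r q, s k := by
  intro q
  induction q with
  | zero =>
    intro h
    interval_cases r
    simp
  | succ q ih =>
    intro h
    rcases Nat.lt_or_ge r (q+1) with h' | h'
    · have hrq : r ≤ q := by omega
      have e1 : ∑ n ∈ Finset.Icc r (q+1), a n * s n
          = (∑ n ∈ Finset.Icc r q, a n * s n) + a (q+1) * s (q+1) :=
        Finset.sum_Icc_succ_top (by omega) _
      have e2 : ∑ k ∈ Finset.Icc r (q+1), s k = (∑ k ∈ Finset.Icc r q, s k) + s (q+1) :=
        Finset.sum_Icc_succ_top (by omega) _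
      rw [e1, ih hrq, e2, Finset.sum_Ico_succ_top hrq]
      ring
    · have : r = q+1 := by omega
      subst this
      simp

lemma my_abel_bound (a s : ℕ → ℂ) (r q : ℕ) (hrq : r ≤ q) (B : ℝ) (hB : 0 ≤ B)
    (hs : ∀ n, ‖∑ k ∈ Finset.Icc r n, s k‖ ≤ B) :
    ‖∑ n ∈ Finset.Icc r q, a n * s n‖ ≤
      ((∑ n ∈ Finset.Ico r q, ‖a n - a (n+1)‖) + ‖a q‖) * B := by
  rw [my_abel_identity a s r q hrq]
  calc ‖_‖ ≤ ‖∑ n ∈ Finset.Ico r q, (a n - a (n+1)) * (∑ k ∈ Finset.Icc r n, s k)‖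
        + ‖a q * ∑ k ∈ Finset.Icc r q, s k‖ := norm_add_le _ _
    _ ≤ (∑ n ∈ Finset.Ico r q, ‖a n - a (n+1)‖ * B) + ‖a q‖ * B := by
        gcongr
        · calc ‖_‖ ≤ ∑ n ∈ Finset.Ico r q, ‖(a n - a (n+1)) * (∑ k ∈ Finset.Icc r n, s k)‖ :=
              norm_sum_le _ _
            _ ≤ _ := by
              apply Finset.sum_le_sum
              intro n _
              rw [norm_mul]
              exact mul_le_mul_of_nonneg_left (hs n) (norm_nonneg _)
        · rw [norm_mul]
          exact mul_le_mul_of_nonneg_left (hs q) (norm_nonneg _)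
    _ = _ := by rw [← Finset.sum_mul, add_mul]

lemma my_dyadic (a : ℕ → ℂ) (C : ℝ) (hC : 0 ≤ C) (m₁ : ℕ) (hm₁ : 1 ≤ m₁)
    (hblock : ∀ m, m₁ ≤ m → ∑ n ∈ Finset.Icc m (2*m), ‖a n - a (n+1)‖ ≤ C/m) :
    ∀ p q, m₁ ≤ p → ∑ n ∈ Finset.Icc p q, ‖a n - a (n+1)‖ ≤ 2*C/p := by
  have key : ∀ k p, m₁ ≤ p → ∑ n ∈ Finset.Icc p (p+k), ‖a n - a (n+1)‖ ≤ 2*C/p := by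
    intro k
    induction k using Nat.strong_induction_on with
    | _ k ih =>
      intro p hp
      have hp1 : (1:ℝ) ≤ p := by exact_mod_cast hm₁.trans hp
      have hp0 : (0:ℝ) < p := by linarith
      rcases le_or_gt k p with hk | hk
      · calc ∑ n ∈ Finset.Icc p (p+k), ‖a n - a (n+1)‖
            ≤ ∑ n ∈ Finset.Icc p (2*p), ‖a n - a (n+1)‖ := by
              apply Finset.sum_le_sum_of_subset_of_nonneg
              · apply Finset.Icc_subset_Icc le_rfl; omega
              · intro n _ _; exact norm_nonneg _
          _ ≤ C/p := hblock p hp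
          _ ≤ 2*C/p := by
              have h := div_nonneg hC hp0.le
              have h2 : 2*C/(p:ℝ) = C/(p:ℝ) + C/(p:ℝ) := by ring
              linarith
      · have hsplit : Finset.Icc p (p+k) = Finset.Icc p (2*p) ∪ Finset.Icc (2*p+1) (p+k) := by
          ext n; simp only [Finset.mem_Icc, Finset.mem_union]; omega
        have hdisj : Disjoint (Finset.Icc p (2*p)) (Finset.Icc (2*p+1) (p+k)) := by
          rw [Finset.disjoint_left]; intro n hn hn'
          simp only [Finset.mem_Icc] at hn hn'; omega
        rw [hsplit, Finset.sum_union hdisj]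
        have h2 : ∑ n ∈ Finset.Icc (2*p+1) (p+k), ‖a n - a (n+1)‖
            ≤ 2*C/((2*p+1:ℕ):ℝ) := by
          have hk' : p + k = (2*p+1) + (k - p - 1) := by omega
          rw [hk']
          exact ih (k - p - 1) (by omega) (2*p+1) (by omega)
        have h3 : 2*C/((2*p+1:ℕ):ℝ) ≤ C/p := by
          push_cast
          rw [div_le_div_iff₀ (by positivity) hp0]
          nlinarith
        calc _ ≤ C/(p:ℝ) + 2*C/((2*p+1:ℕ):ℝ) := add_le_add (hblock p hp) h2
          _ ≤ C/p + C/p := by linarith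
          _ = 2*C/p := by ring
  intro p q hp
  rcases le_or_gt p q with hpq | hpq
  · have : q = p + (q - p) := by omega
    rw [this]; exact key (q-p) p hp
  · rw [Finset.Icc_eq_empty (by omega)]
    simp only [Finset.sum_empty]
    positivity

lemma my_symm_split (g : ℤ → ℂ) (N : ℕ) :
    ∑ k ∈ Finset.Icc (-(N:ℤ)) (N:ℤ), g k
      = g 0 + ∑ n ∈ Finset.Icc 1 N, (g (n:ℤ) + g (-(n:ℤ))) := by
  induction N with
  | zero => simp
  | succ N ih =>
    have hins : Finset.Icc (-(N+1:ℕ):ℤ) ((N+1:ℕ):ℤ)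
        = insert (-(N+1:ℕ):ℤ) (insert ((N+1:ℕ):ℤ) (Finset.Icc (-(N:ℕ):ℤ) ((N:ℕ):ℤ))) := by
      ext a
      simp only [Finset.mem_Icc, Finset.mem_insert]
      push_cast
      omega
    rw [hins, Finset.sum_insert, Finset.sum_insert, ih,
      Finset.sum_Icc_succ_top (by omega : 1 ≤ N+1)]
    · push_cast
      ring
    · simp only [Finset.mem_Icc]
      push_cast
      omega
    · simp only [Finset.mem_insert, Finset.mem_Icc]
      push_cast
      omega

lemma my_two_I_sin (z : ℂ) :
    Complex.exp (z*I) - Complex.exp (-z*I) = 2*I*Complex.sin z := by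
  rw [Complex.sin]; field_simp; ring_nf; rw [Complex.I_sq]; ring


/-- Theorem 1, sufficiency: under the GBV hypotheses, if `Σ_{n≥1} |f̂(n)+f̂(−n)| < ∞`
and `lim n·f̂(n) = 0`, then the symmetric partial sums converge at every real `x`
and the sum function is continuous. -/
theorem stmt_12 (fhat : ℤ → ℂ)
    (h1 : GBV (fun n : ℕ => fhat (n : ℤ)))
    (h2 : GBV (fun n : ℕ => fhat (n : ℤ) + fhat (-(n : ℤ))))
    (hsum : Summable (fun n : ℕ => ‖fhat ((n : ℤ) + 1) + fhat (-(n : ℤ) - 1)‖))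
    (hlim : Filter.Tendsto (fun n : ℕ => (n : ℂ) * fhat (n : ℤ)) Filter.atTop (nhds 0)) :
    ∃ f : ℝ → ℂ, Continuous f ∧ ∀ x : ℝ, Filter.Tendsto
      (fun N : ℕ => ∑ k ∈ Finset.Icc (-(N : ℤ)) (N : ℤ),
        fhat k * Complex.exp ((k : ℂ) * (x : ℂ) * Complex.I))
      Filter.atTop (nhds (f x)) := by
  classical
  obtain ⟨-, N₀, hN₀, M, hM, hblock₀⟩ := h1
  set A : ℕ → ℂ := fun n => fhat (n:ℤ) with hA_def
  set Bc : ℕ → ℂ := fun n => fhat (n:ℤ) + fhat (-(n:ℤ)) with hBc_def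
  set S : ℕ → ℝ → ℂ := fun N x => ∑ k ∈ Finset.Icc (-(N:ℤ)) (N:ℤ),
    fhat k * Complex.exp ((k:ℂ)*(x:ℂ)*Complex.I) with hS_def
  -- continuity of partial sums
  have hScont : ∀ N, Continuous (S N) := by
    intro N
    apply continuous_finset_sum
    intro k _
    exact continuous_const.mul (Complex.continuous_exp.comp
      ((continuous_const.mul Complex.continuous_ofReal).mul continuous_const))
  -- difference formula
  have hdiff : ∀ p q (x : ℝ), p ≤ q → S q x - S p x
      = (∑ n ∈ Finset.Icc (p+1) q, Bc n * Complex.exp ((-(n:ℂ))*(x:ℂ)*I))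
        + (2*I) * ∑ n ∈ Finset.Icc (p+1) q, A n * ((Real.sin (n*x) : ℝ) : ℂ) := by
    intro p q x hpq
    have hsplit : ∀ N : ℕ, S N x = fhat 0
        + ∑ n ∈ Finset.Icc 1 N, (fhat (n:ℤ) * Complex.exp ((n:ℂ)*(x:ℂ)*I)
            + fhat (-(n:ℤ)) * Complex.exp ((-(n:ℂ))*(x:ℂ)*I)) := by
      intro N
      have h := my_symm_split (fun k => fhat k * Complex.exp ((k:ℂ)*(x:ℂ)*I)) N
      simp only [Int.cast_neg, Int.cast_natCast, Int.cast_zero, zero_mul,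
        Complex.exp_zero, mul_one] at h
      exact h
    have hcons : ∑ n ∈ Finset.Icc 1 p, (fhat (n:ℤ) * Complex.exp ((n:ℂ)*(x:ℂ)*I)
            + fhat (-(n:ℤ)) * Complex.exp ((-(n:ℂ))*(x:ℂ)*I))
          + ∑ n ∈ Finset.Icc (p+1) q, (fhat (n:ℤ) * Complex.exp ((n:ℂ)*(x:ℂ)*I)
            + fhat (-(n:ℤ)) * Complex.exp ((-(n:ℂ))*(x:ℂ)*I))
        = ∑ n ∈ Finset.Icc 1 q, (fhat (n:ℤ) * Complex.exp ((n:ℂ)*(x:ℂ)*I)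
            + fhat (-(n:ℤ)) * Complex.exp ((-(n:ℂ))*(x:ℂ)*I)) := by
      rw [show Finset.Icc 1 p = Finset.Ioc 0 p from (Finset.Icc_add_one_left_eq_Ioc 0 p),
        show Finset.Icc 1 q = Finset.Ioc 0 q from (Finset.Icc_add_one_left_eq_Ioc 0 q),
        show Finset.Icc (p+1) q = Finset.Ioc p q from (Finset.Icc_add_one_left_eq_Ioc p q)]
      exact Finset.sum_Ioc_consecutive _ (Nat.zero_le p) hpq
    have hterm : ∀ n : ℕ, fhat (n:ℤ) * Complex.exp ((n:ℂ)*(x:ℂ)*I)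
            + fhat (-(n:ℤ)) * Complex.exp ((-(n:ℂ))*(x:ℂ)*I)
        = Bc n * Complex.exp ((-(n:ℂ))*(x:ℂ)*I) + (2*I) * (A n * ((Real.sin (n*x) : ℝ) : ℂ)) := by
      intro n
      have hz : Complex.exp ((n:ℂ)*(x:ℂ)*I) - Complex.exp ((-(n:ℂ))*(x:ℂ)*I)
          = 2*I*((Real.sin (n*x) : ℝ) : ℂ) := by
        have h1 : (n:ℂ)*(x:ℂ) = (((n:ℝ)*x : ℝ) : ℂ) := by push_cast; ring
        have h2 : (-(n:ℂ))*(x:ℂ) = -((((n:ℝ)*x : ℝ) : ℂ)) := by push_cast; ring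
        rw [show (n:ℂ)*(x:ℂ)*I = ((((n:ℝ)*x : ℝ) : ℂ))*I by rw [← h1],
          show (-(n:ℂ))*(x:ℂ)*I = -((((n:ℝ)*x : ℝ) : ℂ))*I by rw [← h2],
          my_two_I_sin, Complex.ofReal_sin]
      simp only [hBc_def, hA_def]
      linear_combination fhat (n:ℤ) * hz
    have e : ∑ n ∈ Finset.Icc (p+1) q, (fhat (n:ℤ) * Complex.exp ((n:ℂ)*(x:ℂ)*I)
            + fhat (-(n:ℤ)) * Complex.exp ((-(n:ℂ))*(x:ℂ)*I))
        = (∑ n ∈ Finset.Icc (p+1) q, Bc n * Complex.exp ((-(n:ℂ))*(x:ℂ)*I))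
          + (2*I) * ∑ n ∈ Finset.Icc (p+1) q, A n * ((Real.sin (n*x) : ℝ) : ℂ) := by
      rw [Finset.mul_sum, ← Finset.sum_add_distrib]
      exact Finset.sum_congr rfl (fun n _ => hterm n)
    rw [hsplit q, hsplit p]
    linear_combination e - hcons
  -- norm of the exponential factor is 1
  have hEabs : ∀ (n : ℕ) (x : ℝ), ‖Complex.exp ((-(n:ℂ))*(x:ℂ)*I)‖ = 1 := by
    intro n x
    rw [show (-(n:ℂ))*(x:ℂ)*I = ((-(n:ℝ)*x : ℝ):ℂ)*I by push_cast; ring,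
      Complex.norm_exp_ofReal_mul_I]
  -- tail bound for the absolutely convergent part
  have hbtail : ∀ ε : ℝ, 0 < ε → ∃ m₃ : ℕ, ∀ p q, m₃ + 1 ≤ p →
      ∑ n ∈ Finset.Icc p q, ‖Bc n‖ ≤ ε := by
    intro ε hε
    set G : ℕ → ℝ := fun j => ‖fhat ((j:ℤ)+1) + fhat (-(j:ℤ)-1)‖ with hG_def
    have hGnn : ∀ j, 0 ≤ G j := fun j => norm_nonneg _
    have htend := tendsto_sum_nat_add G
    rw [Metric.tendsto_atTop] at htend
    obtain ⟨m₃, hm₃⟩ := htend ε hε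
    refine ⟨m₃, fun p q hp => ?_⟩
    have hp1 : 1 ≤ p := by omega
    have hBG : ∀ j : ℕ, ‖Bc (p + j)‖ = G (j + (p-1)) := by
      intro j
      simp only [hBc_def, hG_def]
      congr 2
      · congr 1
        push_cast [Nat.cast_sub hp1]
        ring
      · congr 1
        push_cast [Nat.cast_sub hp1]
        ring
    have hre : ∑ n ∈ Finset.Icc p q, ‖Bc n‖
        = ∑ j ∈ Finset.range (q+1-p), G (j + (p-1)) := by
      rw [show Finset.Icc p q = Finset.Ico p (q+1) from rfl, Finset.sum_Ico_eq_sum_range]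
      exact Finset.sum_congr rfl fun j _ => hBG j
    have hsum' : Summable (fun j => G (j + (p-1))) := (summable_nat_add_iff (p-1)).2 hsum
    have hle : ∑ j ∈ Finset.range (q+1-p), G (j + (p-1)) ≤ ∑' j, G (j + (p-1)) :=
      hsum'.sum_le_tsum _ (fun i _ => hGnn _)
    have hd := hm₃ (p-1) (by omega)
    rw [Real.dist_eq, sub_zero] at hd
    have htnn : 0 ≤ ∑' j, G (j + (p-1)) := tsum_nonneg fun j => hGnn _
    rw [_root_.abs_of_nonneg htnn] at hd
    rw [hre]
    linarith
  -- MAIN uniform Cauchy estimate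
  have hUC : ∀ ε : ℝ, 0 < ε → ∃ m₀ : ℕ, ∀ p q (x : ℝ), m₀ ≤ p → p ≤ q →
      ‖S q x - S p x‖ ≤ ε := by
    intro ε hε
    set ε' : ℝ := ε / (4*(2*M+5)) with hε'_def
    have hε' : 0 < ε' := by positivity
    -- from hlim
    rw [Metric.tendsto_atTop] at hlim
    obtain ⟨m₂, hm₂⟩ := hlim ε' hε'
    have habs : ∀ n, m₂ ≤ n → (n:ℝ) * ‖A n‖ ≤ ε' := by
      intro n hn
      have := hm₂ n hn
      rw [dist_zero_right] at this
      have h2 : ‖(n:ℂ) * fhat (n:ℤ)‖ = (n:ℝ) * ‖A n‖ := by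
        rw [norm_mul, Complex.norm_natCast, hA_def]
      linarith [h2 ▸ this.le]
    set m₁ : ℕ := max m₂ 1 with hm₁_def
    have hm₁1 : 1 ≤ m₁ := le_max_right _ _
    have hAle : ∀ n, m₁ ≤ n → ‖A n‖ ≤ ε'/n := by
      intro n hn
      have hn1 : 1 ≤ n := hm₁1.trans hn
      have hnR : (0:ℝ) < n := by exact_mod_cast hn1
      have := habs n ((le_max_left _ _).trans hn)
      rw [le_div_iff₀ hnR]
      linarith
    have hblock : ∀ m, m₁ ≤ m →
        ∑ n ∈ Finset.Icc m (2*m), ‖A n - A (n+1)‖ ≤ (M*ε')/m := by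
      intro m hm
      have hm1 : 1 ≤ m := hm₁1.trans hm
      have hmR : (0:ℝ) < m := by exact_mod_cast hm1
      have hsup : (⨆ n ∈ Finset.Ico m (m + N₀), ‖A n‖) ≤ ε'/m := by
        apply Real.iSup_le _ (by positivity)
        intro n
        apply Real.iSup_le _ (by positivity)
        intro hn
        have hmn : m ≤ n := (Finset.mem_Ico.1 hn).1
        have hnR : (0:ℝ) < n := by
          have : 1 ≤ n := hm1.trans hmn
          exact_mod_cast this
        calc ‖A n‖ ≤ ε'/n := hAle n (hm.trans hmn)
          _ ≤ ε'/m := by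
            apply div_le_div_of_nonneg_left hε'.le hmR
            exact_mod_cast hmn
      calc ∑ n ∈ Finset.Icc m (2*m), ‖A n - A (n+1)‖
          ≤ M * ⨆ n ∈ Finset.Ico m (m + N₀), ‖A n‖ := hblock₀ m hm1
        _ ≤ M * (ε'/m) := by exact mul_le_mul_of_nonneg_left hsup hM.le
        _ = (M*ε')/m := by ring
    have hvar := my_dyadic A (M*ε') (by positivity) m₁ hm₁1 hblock
    -- the sine-sum estimate
    have hsine : ∀ p q (x : ℝ), m₁ ≤ p →
        ‖∑ n ∈ Finset.Icc p q, A n * ((Real.sin (n*x) : ℝ) : ℂ)‖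
          ≤ (2*M+5)*ε' := by
      intro p q x hp
      have hRHSnn : (0:ℝ) ≤ (2*M+5)*ε' := by positivity
      by_cases hδ0 : Real.sin (x/2) = 0
      · have : ∑ n ∈ Finset.Icc p q, A n * ((Real.sin (n*x) : ℝ) : ℂ) = 0 := by
          apply Finset.sum_eq_zero
          intro n _
          rw [my_sin_vanish hδ0 n]
          simp
        rw [this, norm_zero]
        exact hRHSnn
      · set δ : ℝ := |Real.sin (x/2)| with hδ_def
        have hδ : 0 < δ := abs_pos.2 hδ0
        have hδ1 : δ ≤ 1 := abs_le.mpr ⟨Real.neg_one_le_sin _, Real.sin_le_one _⟩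
        have hδinv1 : 1 ≤ δ⁻¹ := (one_le_inv_iff₀).2 ⟨hδ, hδ1⟩
        set P : ℕ := Nat.ceil δ⁻¹ with hP_def
        have hPδ : δ⁻¹ ≤ (P:ℝ) := Nat.le_ceil _
        have hPub : (P:ℝ) ≤ 2*δ⁻¹ := by
          have := Nat.ceil_lt_add_one (show (0:ℝ) ≤ δ⁻¹ by positivity)
          have h2 : δ⁻¹ + 1 ≤ 2*δ⁻¹ := by linarith
          linarith [this.le]
        have hsinx : |Real.sin x| ≤ 2*δ := by
          have h2 : Real.sin x = 2*Real.sin (x/2)*Real.cos (x/2) := by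
            conv_lhs => rw [show x = 2*(x/2) by ring]
            exact Real.sin_two_mul (x/2)
          rw [h2, abs_mul, abs_mul, _root_.abs_two, hδ_def]
          have hc : |Real.cos (x/2)| ≤ 1 := Real.abs_cos_le_one _
          have hs0 : 0 ≤ |Real.sin (x/2)| := abs_nonneg _
          nlinarith
        -- per-term bound in the small range
        have hterm_small : ∀ n, m₁ ≤ n →
            ‖A n * ((Real.sin (n*x) : ℝ) : ℂ)‖ ≤ 2*ε'*δ := by
          intro n hn
          have hn1 : 1 ≤ n := hm₁1.trans hn
          have hnR : (0:ℝ) < n := by exact_mod_cast hn1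
          rw [norm_mul, Complex.norm_real, Real.norm_eq_abs]
          calc ‖A n‖ * |Real.sin (n*x)|
              ≤ (ε'/n) * ((n:ℝ) * (2*δ)) := by
                apply mul_le_mul (hAle n hn) ?_ (abs_nonneg _) (by positivity)
                calc |Real.sin (n*x)| ≤ (n:ℝ) * |Real.sin x| := my_sin_nat_mul_le n x
                  _ ≤ (n:ℝ) * (2*δ) := by
                    apply mul_le_mul_of_nonneg_left hsinx (by positivity)
            _ = 2*ε'*δ := by field_simp
        -- bound on a block contained in [m₁, P]
        have hsmall : ∀ p' q', m₁ ≤ p' → q' ≤ P →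
            ‖∑ n ∈ Finset.Icc p' q', A n * ((Real.sin (n*x) : ℝ) : ℂ)‖
              ≤ 4*ε' := by
          intro p' q' hp' hq'
          calc ‖∑ n ∈ Finset.Icc p' q', A n * ((Real.sin (n*x) : ℝ) : ℂ)‖
              ≤ ∑ n ∈ Finset.Icc p' q', ‖A n * ((Real.sin (n*x) : ℝ) : ℂ)‖ :=
                norm_sum_le _ _
            _ ≤ ∑ n ∈ Finset.Icc p' q', 2*ε'*δ := by
                apply Finset.sum_le_sum
                intro n hn
                exact hterm_small n (hp'.trans (Finset.mem_Icc.1 hn).1)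
            _ = (Finset.Icc p' q').card * (2*ε'*δ) := by
                rw [Finset.sum_const, nsmul_eq_mul]
            _ ≤ (P:ℝ) * (2*ε'*δ) := by
                apply mul_le_mul_of_nonneg_right _ (by positivity)
                have hcard : (Finset.Icc p' q').card ≤ P := by
                  rw [Nat.card_Icc]
                  omega
                exact_mod_cast hcard
            _ ≤ (2*δ⁻¹) * (2*ε'*δ) := by
                apply mul_le_mul_of_nonneg_right hPub (by positivity)
            _ = 4*ε' := by field_simp; ring
        -- bound on a block contained in [max(m₁,P+1), ∞)
        have habel : ∀ r q', m₁ ≤ r → P + 1 ≤ r →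
            ‖∑ n ∈ Finset.Icc r q', A n * ((Real.sin (n*x) : ℝ) : ℂ)‖
              ≤ (2*M+1)*ε' := by
          intro r q' hr hrP
          rcases lt_or_ge q' r with h | hrq'
          · rw [Finset.Icc_eq_empty (by omega)]
            simp only [Finset.sum_empty, norm_zero]
            positivity
          · have hr1 : 1 ≤ r := hm₁1.trans hr
            have hrR : (0:ℝ) < r := by exact_mod_cast hr1
            have hrδ : 1 ≤ (r:ℝ) * δ := by
              have : δ⁻¹ ≤ (r:ℝ) := by
                have : (P:ℝ) ≤ r := by exact_mod_cast (by omega : P ≤ r)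
                linarith
              calc (1:ℝ) = δ⁻¹ * δ := by field_simp
                _ ≤ (r:ℝ) * δ := by apply mul_le_mul_of_nonneg_right this hδ.le
            have hs : ∀ n, ‖∑ k ∈ Finset.Icc r n, ((Real.sin (k*x) : ℝ) : ℂ)‖
                ≤ 1/δ := by
              intro n
              rw [show (∑ k ∈ Finset.Icc r n, ((Real.sin (k*x) : ℝ) : ℂ))
                  = (((∑ k ∈ Finset.Icc r n, Real.sin (k*x)) : ℝ) : ℂ) by push_cast; rfl,
                Complex.norm_real, Real.norm_eq_abs]
              exact my_dirichlet hδ0 r n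
            have hbd := my_abel_bound A (fun n => ((Real.sin (n*x) : ℝ) : ℂ)) r q' hrq'
              (1/δ) (by positivity) hs
            have hIco : ∑ n ∈ Finset.Ico r q', ‖A n - A (n+1)‖ ≤ 2*(M*ε')/r := by
              calc ∑ n ∈ Finset.Ico r q', ‖A n - A (n+1)‖
                  ≤ ∑ n ∈ Finset.Icc r q', ‖A n - A (n+1)‖ := by
                    apply Finset.sum_le_sum_of_subset_of_nonneg
                    · exact Finset.Ico_subset_Icc_self
                    · intro n _ _; exact norm_nonneg _
                _ ≤ 2*(M*ε')/r := hvar r q' hr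
            have hAq : ‖A q'‖ ≤ ε'/r := by
              have hq1 : m₁ ≤ q' := hr.trans hrq'
              calc ‖A q'‖ ≤ ε'/q' := hAle q' hq1
                _ ≤ ε'/r := by
                  apply div_le_div_of_nonneg_left hε'.le hrR
                  exact_mod_cast hrq'
            calc ‖∑ n ∈ Finset.Icc r q', A n * ((Real.sin (n*x) : ℝ) : ℂ)‖
                ≤ ((∑ n ∈ Finset.Ico r q', ‖A n - A (n+1)‖)
                    + ‖A q'‖) * (1/δ) := hbd
              _ ≤ (2*(M*ε')/r + ε'/r) * (1/δ) := by
                  apply mul_le_mul_of_nonneg_right (add_le_add hIco hAq) (by positivity)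
              _ = ((2*M+1)*ε') * (1/((r:ℝ)*δ)) := by field_simp
              _ ≤ ((2*M+1)*ε') * 1 := by
                  apply mul_le_mul_of_nonneg_left _ (by positivity)
                  rw [div_le_one (by positivity)]
                  linarith
              _ = (2*M+1)*ε' := by ring
        -- now combine the three cases
        rcases le_or_gt q P with hqP | hPq
        · calc ‖∑ n ∈ Finset.Icc p q, A n * ((Real.sin (n*x) : ℝ) : ℂ)‖
              ≤ 4*ε' := hsmall p q hp hqP
            _ ≤ (2*M+5)*ε' := by nlinarith
        · rcases le_or_gt (P+1) p with hPp | hpP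
          · calc ‖∑ n ∈ Finset.Icc p q, A n * ((Real.sin (n*x) : ℝ) : ℂ)‖
                ≤ (2*M+1)*ε' := habel p q hp hPp
              _ ≤ (2*M+5)*ε' := by nlinarith
          · have hsplit2 : Finset.Icc p q = Finset.Icc p P ∪ Finset.Icc (P+1) q := by
              ext n
              simp only [Finset.mem_Icc, Finset.mem_union]
              omega
            have hdisj : Disjoint (Finset.Icc p P) (Finset.Icc (P+1) q) := by
              rw [Finset.disjoint_left]
              intro n hn hn'
              simp only [Finset.mem_Icc] at hn hn'
              omega
            rw [hsplit2, Finset.sum_union hdisj]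
            calc ‖_ + _‖
                ≤ ‖∑ n ∈ Finset.Icc p P, A n * ((Real.sin (n*x) : ℝ) : ℂ)‖
                  + ‖∑ n ∈ Finset.Icc (P+1) q, A n * ((Real.sin (n*x) : ℝ) : ℂ)‖ :=
                  norm_add_le _ _
              _ ≤ 4*ε' + (2*M+1)*ε' := add_le_add (hsmall p P hp le_rfl)
                  (habel (P+1) q (by omega) le_rfl)
              _ = (2*M+5)*ε' := by ring
    -- b-part tail
    obtain ⟨m₃, hm₃⟩ := hbtail (ε/2) (by positivity)
    refine ⟨max m₁ (m₃+1), fun p q x hp hpq => ?_⟩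
    have hp₁ : m₁ ≤ p+1 := by
      have := le_max_left m₁ (m₃+1)
      omega
    have hp₃ : m₃ + 1 ≤ p+1 := by
      have := le_max_right m₁ (m₃+1)
      omega
    rw [hdiff p q x hpq]
    calc ‖_‖
        ≤ ‖∑ n ∈ Finset.Icc (p+1) q, Bc n * Complex.exp ((-(n:ℂ))*(x:ℂ)*I)‖
          + ‖(2*I) * ∑ n ∈ Finset.Icc (p+1) q, A n * ((Real.sin (n*x) : ℝ) : ℂ)‖ :=
          norm_add_le _ _
      _ ≤ (∑ n ∈ Finset.Icc (p+1) q, ‖Bc n‖)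
          + 2 * ((2*M+5)*ε') := by
          apply add_le_add
          · calc ‖∑ n ∈ Finset.Icc (p+1) q, Bc n * Complex.exp ((-(n:ℂ))*(x:ℂ)*I)‖
                ≤ ∑ n ∈ Finset.Icc (p+1) q, ‖Bc n * Complex.exp ((-(n:ℂ))*(x:ℂ)*I)‖ :=
                  norm_sum_le _ _
              _ = ∑ n ∈ Finset.Icc (p+1) q, ‖Bc n‖ := by
                  apply Finset.sum_congr rfl
                  intro n _
                  rw [norm_mul, hEabs n x, mul_one]
          · rw [norm_mul]
            have h2I : ‖2*I‖ = 2 := by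
              rw [norm_mul, Complex.norm_two, Complex.norm_I, mul_one]
            rw [h2I]
            exact mul_le_mul_of_nonneg_left (hsine (p+1) q x hp₁) (by norm_num)
      _ ≤ ε/2 + 2*((2*M+5)*ε') := by
          have := hm₃ (p+1) q hp₃
          linarith
      _ = ε := by
          rw [hε'_def]
          field_simp
          ring
  -- pointwise limits exist
  have hptwise : ∀ x : ℝ, ∃ L : ℂ, Tendsto (fun N => S N x) atTop (nhds L) := by
    intro x
    apply cauchySeq_tendsto_of_complete
    rw [Metric.cauchySeq_iff']
    intro ε hε
    obtain ⟨m₀, hm₀⟩ := hUC (ε/2) (by positivity)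
    refine ⟨m₀, fun n hn => ?_⟩
    rw [dist_eq_norm]
    calc ‖S n x - S m₀ x‖ ≤ ε/2 := hm₀ m₀ n x le_rfl hn
      _ < ε := by linarith
  choose f hf using hptwise
  -- uniform Cauchy
  have hUCS : UniformCauchySeqOn S atTop Set.univ := by
    rw [Metric.uniformCauchySeqOn_iff]
    intro ε hε
    obtain ⟨m₀, hm₀⟩ := hUC (ε/2) (by positivity)
    refine ⟨m₀, fun m hm n hn x _ => ?_⟩
    rcases le_or_gt m n with h | h
    · rw [dist_eq_norm, ← neg_sub, norm_neg]
      calc ‖S n x - S m x‖ ≤ ε/2 := hm₀ m n x hm h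
        _ < ε := by linarith
    · rw [dist_eq_norm]
      calc ‖S m x - S n x‖ ≤ ε/2 := hm₀ n m x hn h.le
        _ < ε := by linarith
  have hTU : TendstoUniformlyOn S f atTop Set.univ :=
    hUCS.tendstoUniformlyOn_of_tendsto (fun x _ => hf x)
  have hfc : Continuous f := by
    rw [← continuousOn_univ]
    apply hTU.continuousOn
    apply Filter.Eventually.frequently
    filter_upwards with N
    exact (hScont N).continuousOn
  exact ⟨f, hfc, fun x => hf x⟩

end
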